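/- Let R > 0. For U₀ > 0 define L(U₀) = (2R²/U₀)·∫_{1}^{∞} dy/(y²√(y⁴−1)) and E(U₀) = (U₀/π)·( ∫_{1}^{∞} ( y²/√(y⁴−1) − 1 ) dy − 1 ). Then for every U₀ > 0, E(U₀)·L(U₀) = − 4π²R² / Γ(1/4)⁴; in particular E(U₀) is negative and the quark–antiquark potential obeys the conformal Coulomb law E = − (4π²R²/Γ(1/4)⁴)·(1/L). -/

import Mathlib

open MeasureTheory Real Set Filter

lemma realBeta :
    ∫ x in Ioo (0:ℝ) 1, x ^ ((3:ℝ)/4 - 1) * (1-x) ^ ((1:ℝ)/2 - 1)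
      = Real.Gamma (3/4) * Real.Gamma (1/2) / Real.Gamma (5/4) := by
  have hbeta : Complex.betaIntegral (3/4) (1/2)
      = ((∫ x in (0:ℝ)..1, x ^ ((3:ℝ)/4 - 1) * (1-x) ^ ((1:ℝ)/2 - 1) : ℝ) : ℂ) := by
    rw [Complex.betaIntegral, ← intervalIntegral.integral_ofReal]
    apply intervalIntegral.integral_congr
    intro x hx
    rw [uIcc_of_le (by norm_num : (0:ℝ) ≤ 1)] at hx
    push_cast
    rw [Complex.ofReal_cpow hx.1, Complex.ofReal_cpow (by linarith [hx.2] : (0:ℝ) ≤ 1 - x)]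
    push_cast
    norm_num
  have hG := Complex.Gamma_mul_Gamma_eq_betaIntegral
    (s := 3/4) (t := 1/2) (by norm_num) (by norm_num)
  rw [hbeta] at hG
  have h54 : (3/4 : ℂ) + 1/2 = ((5/4 : ℝ) : ℂ) := by norm_num
  rw [h54, Complex.Gamma_ofReal] at hG
  have h34 : (3/4 : ℂ) = ((3/4 : ℝ) : ℂ) := by norm_num
  have h12 : (1/2 : ℂ) = ((1/2 : ℝ) : ℂ) := by norm_num
  rw [h34, h12, Complex.Gamma_ofReal, Complex.Gamma_ofReal] at hG
  have hreal : Real.Gamma (3/4) * Real.Gamma (1/2)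
      = Real.Gamma (5/4) * ∫ x in (0:ℝ)..1, x ^ ((3:ℝ)/4 - 1) * (1-x) ^ ((1:ℝ)/2 - 1) := by
    exact_mod_cast hG
  have hGne : Real.Gamma (5/4) ≠ 0 := (Real.Gamma_pos_of_pos (by norm_num)).ne'
  rw [intervalIntegral.integral_of_le (by norm_num : (0:ℝ) ≤ 1),
    ← integral_Ioc_eq_integral_Ioo] at *
  field_simp
  linarith [hreal]

lemma sqrt_pos_of_one_lt {y : ℝ} (hy : 1 < y) : 0 < Real.sqrt (y ^ 4 - 1) := by
  have : (1:ℝ) < y ^ 4 := one_lt_pow₀ hy (by norm_num)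
  apply Real.sqrt_pos.mpr; linarith

lemma image_inv_pow : (fun y : ℝ => (y ^ 4)⁻¹) '' Ioi 1 = Ioo 0 1 := by
  ext x
  constructor
  · rintro ⟨y, hy, rfl⟩
    have hy1 : (1:ℝ) < y := hy
    have h4 : (1:ℝ) < y ^ 4 := one_lt_pow₀ hy1 (by norm_num)
    exact ⟨by positivity, by rw [inv_lt_one_iff₀]; right; exact h4⟩
  · rintro ⟨hx0, hx1⟩
    refine ⟨x ^ (-(1/4) : ℝ), ?_, ?_⟩
    · exact (Real.one_lt_rpow_iff_of_pos hx0).mpr (Or.inr ⟨hx1, by norm_num⟩)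
    · have h : (x ^ (-(1/4) : ℝ)) ^ (4:ℕ) = x⁻¹ := by
        rw [← Real.rpow_natCast (x ^ (-(1/4) : ℝ)) 4, ← Real.rpow_mul hx0.le]
        norm_num [Real.rpow_neg_one]
      show ((x ^ (-(1/4) : ℝ)) ^ (4:ℕ))⁻¹ = x
      rw [h, inv_inv]

lemma I1_sub : (4:ℝ) * ∫ y in Ioi (1:ℝ), 1 / (y ^ 2 * Real.sqrt (y ^ 4 - 1))
    = ∫ x in Ioo (0:ℝ) 1, x ^ ((3:ℝ)/4 - 1) * (1-x) ^ ((1:ℝ)/2 - 1) := by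
  rw [← image_inv_pow,
    integral_image_eq_integral_abs_deriv_smul measurableSet_Ioi
      (f' := fun y => -(4 * y ^ 3) / (y ^ 4) ^ 2)
      (fun y hy => by
        have hy1 : (1:ℝ) < y := hy
        have h := ((hasDerivAt_pow 4 y).inv (by positivity)).hasDerivWithinAt
          (s := Ioi (1:ℝ))
        simp at h; exact h)
      (fun a ha b hb hab => by
        have ha' : (1:ℝ) < a := ha
        have hb' : (1:ℝ) < b := hb
        have h4 : a ^ 4 = b ^ 4 := by
          have := inv_injective hab; simpa using this
        exact (pow_left_inj₀ (by linarith) (by linarith) (by norm_num)).mp h4),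
    ← integral_const_mul]
  apply setIntegral_congr_fun measurableSet_Ioi
  intro y hy
  have hy1 : (1:ℝ) < y := hy
  have hy0 : (0:ℝ) < y := by linarith
  have h41 : (0:ℝ) < y ^ 4 - 1 := by
    have : (1:ℝ) < y ^ 4 := one_lt_pow₀ hy1 (by norm_num); linarith
  have hs := sqrt_pos_of_one_lt hy1
  have h4 : (0:ℝ) ≤ y ^ 4 := by positivity
  simp only [smul_eq_mul]
  have e1 : ((y ^ 4)⁻¹ : ℝ) ^ ((3:ℝ)/4 - 1) = y := by
    rw [show (3:ℝ)/4 - 1 = -(1/4) by norm_num, Real.inv_rpow h4, Real.rpow_neg h4, inv_inv]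
    rw [← Real.rpow_natCast y 4, ← Real.rpow_mul hy0.le]
    norm_num
  have e2 : ((1 : ℝ) - (y ^ 4)⁻¹) ^ ((1:ℝ)/2 - 1) = y ^ 2 / Real.sqrt (y ^ 4 - 1) := by
    have hq : (1 : ℝ) - (y ^ 4)⁻¹ = (y ^ 4 - 1) / y ^ 4 := by field_simp
    rw [hq, show (1:ℝ)/2 - 1 = -(1/2) by norm_num, Real.rpow_neg (by positivity),
      ← Real.sqrt_eq_rpow, Real.sqrt_div h41.le,
      show y ^ 4 = (y ^ 2) ^ 2 by ring, Real.sqrt_sq (by positivity)]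
    rw [inv_div]
  rw [e1, e2]
  have habs : |-(4 * y ^ 3) / (y ^ 4) ^ 2| = 4 * y ^ 3 / (y ^ 4) ^ 2 := by
    rw [abs_div, abs_neg, abs_of_pos (by positivity), abs_of_pos (by positivity)]
  rw [habs]
  field_simp

lemma intOn_shift : IntegrableOn (fun y : ℝ => (Real.sqrt (y - 1))⁻¹) (Ioc 1 2) := by
  have h := (intervalIntegral.intervalIntegrable_rpow' (a := (0:ℝ)) (b := 1)
    (r := -(1/2)) (by norm_num)).comp_sub_right 1
  rw [intervalIntegrable_iff_integrableOn_Ioc_of_le (by norm_num)] at h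
  norm_num at h
  apply h.congr_fun ?_ measurableSet_Ioc
  intro y hy
  show ((y:ℝ) - 1) ^ (-(1/2) : ℝ) = (Real.sqrt (y - 1))⁻¹
  rw [Real.rpow_neg (by linarith [hy.1]), ← Real.sqrt_eq_rpow]

lemma f_meas : Measurable (fun y : ℝ => 1 / (y ^ 2 * Real.sqrt (y ^ 4 - 1))) := by fun_prop

lemma g_meas : Measurable (fun y : ℝ => y ^ 2 / Real.sqrt (y ^ 4 - 1) - 1) := by fun_prop

lemma sqrt_lb {y : ℝ} (hy : 1 < y) : 2 * Real.sqrt (y - 1) ≤ Real.sqrt (y ^ 4 - 1) := by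
  have h : 4 * (y - 1) ≤ y ^ 4 - 1 := by nlinarith [sq_nonneg (y - 1), sq_nonneg (y + 1)]
  calc 2 * Real.sqrt (y - 1) = Real.sqrt (4 * (y - 1)) := by
        rw [show (4:ℝ) * (y-1) = 2^2 * (y-1) by ring, Real.sqrt_mul (by positivity),
          Real.sqrt_sq (by norm_num)]
    _ ≤ _ := Real.sqrt_le_sqrt h

lemma sqrt_lb2 {y : ℝ} (hy : 2 ≤ y) : y ^ 2 / 2 ≤ Real.sqrt (y ^ 4 - 1) := by
  have h16 : (2:ℝ) ^ 4 ≤ y ^ 4 := pow_le_pow_left₀ (by norm_num) hy 4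
  have h : (y ^ 2 / 2) ^ 2 ≤ y ^ 4 - 1 := by nlinarith
  calc y ^ 2 / 2 = Real.sqrt ((y ^ 2 / 2) ^ 2) := (Real.sqrt_sq (by positivity)).symm
    _ ≤ _ := Real.sqrt_le_sqrt h

lemma pow4_ge {y : ℝ} (hy : 2 ≤ y) : (16:ℝ) ≤ y ^ 4 := by
  have := pow_le_pow_left₀ (by norm_num : (0:ℝ) ≤ 2) hy 4
  norm_num at this; linarith

lemma rpow_neg4 {y : ℝ} (hy : 0 < y) : y ^ (-4:ℝ) = ((y ^ 4)⁻¹ : ℝ) := by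
  rw [Real.rpow_neg hy.le, ← Real.rpow_natCast y 4]; norm_num

lemma f_int : IntegrableOn (fun y : ℝ => 1 / (y ^ 2 * Real.sqrt (y ^ 4 - 1))) (Ioi 1) := by
  rw [show Ioi (1:ℝ) = Ioc 1 2 ∪ Ioi 2 from (Ioc_union_Ioi_eq_Ioi (by norm_num)).symm]
  apply IntegrableOn.union
  · apply Integrable.mono' intOn_shift (f_meas.aestronglyMeasurable.restrict)
    rw [ae_restrict_iff' measurableSet_Ioc]
    filter_upwards with y hy
    have hy1 : (1:ℝ) < y := hy.1
    have hs1 : 0 < Real.sqrt (y - 1) := Real.sqrt_pos.mpr (by linarith)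
    have hs : 0 < Real.sqrt (y ^ 4 - 1) := lt_of_lt_of_le (by positivity) (sqrt_lb hy1)
    rw [Real.norm_eq_abs, abs_of_pos (by positivity)]
    have key : Real.sqrt (y - 1) ≤ y ^ 2 * Real.sqrt (y ^ 4 - 1) := by
      have h1 := sqrt_lb hy1
      have h2 : (0:ℝ) ≤ (y ^ 2 - 1) * Real.sqrt (y ^ 4 - 1) :=
        mul_nonneg (by nlinarith) hs.le
      nlinarith
    calc 1 / (y ^ 2 * Real.sqrt (y ^ 4 - 1)) ≤ 1 / Real.sqrt (y - 1) :=
          one_div_le_one_div_of_le hs1 key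
      _ = (Real.sqrt (y - 1))⁻¹ := one_div _
  · apply Integrable.mono'
      ((integrableOn_Ioi_rpow_of_lt (a := -4) (by norm_num) (by norm_num : (0:ℝ) < 2)).const_mul 2)
      (f_meas.aestronglyMeasurable.restrict)
    rw [ae_restrict_iff' measurableSet_Ioi]
    filter_upwards with y hy
    have hy2 : (2:ℝ) < y := hy
    have hy0 : (0:ℝ) < y := by linarith
    have hs : 0 < Real.sqrt (y ^ 4 - 1) := lt_of_lt_of_le (by positivity) (sqrt_lb2 hy2.le)
    have h1 := sqrt_lb2 hy2.le
    rw [Real.norm_eq_abs, abs_of_pos (by positivity)]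
    show 1 / (y ^ 2 * Real.sqrt (y ^ 4 - 1)) ≤ 2 * y ^ (-4:ℝ)
    rw [rpow_neg4 hy0, div_le_iff₀ (by positivity)]
    have h3 : (0:ℝ) < y ^ 4 := by positivity
    have h4 := mul_le_mul_of_nonneg_left h1 (by positivity : (0:ℝ) ≤ 2 * (y ^ 4)⁻¹ * y ^ 2)
    calc (1:ℝ) = 2 * (y ^ 4)⁻¹ * y ^ 2 * (y ^ 2 / 2) := by field_simp
      _ ≤ 2 * (y ^ 4)⁻¹ * y ^ 2 * Real.sqrt (y ^ 4 - 1) := h4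
      _ = 2 * (y ^ 4)⁻¹ * (y ^ 2 * Real.sqrt (y ^ 4 - 1)) := by ring

lemma g_int : IntegrableOn (fun y : ℝ => y ^ 2 / Real.sqrt (y ^ 4 - 1) - 1) (Ioi 1) := by
  rw [show Ioi (1:ℝ) = Ioc 1 2 ∪ Ioi 2 from (Ioc_union_Ioi_eq_Ioi (by norm_num)).symm]
  apply IntegrableOn.union
  · apply Integrable.mono' (g := fun y => 2 * (Real.sqrt (y - 1))⁻¹ + 1)
      ((intOn_shift.const_mul 2).add (integrableOn_const (C := (1:ℝ)) (s := Ioc 1 2) (μ := volume)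
      measure_Ioc_lt_top.ne)) (g_meas.aestronglyMeasurable.restrict)
    rw [ae_restrict_iff' measurableSet_Ioc]
    filter_upwards with y hy
    have hy1 : (1:ℝ) < y := hy.1
    have hy2 : y ≤ 2 := hy.2
    have hs1 : 0 < Real.sqrt (y - 1) := Real.sqrt_pos.mpr (by linarith)
    have hs : 0 < Real.sqrt (y ^ 4 - 1) := lt_of_lt_of_le (by positivity) (sqrt_lb hy1)
    have key : y ^ 2 / Real.sqrt (y ^ 4 - 1) ≤ 2 * (Real.sqrt (y - 1))⁻¹ := by
      rw [div_le_iff₀ hs]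
      have h1 := sqrt_lb hy1
      calc y ^ 2 ≤ 4 := by nlinarith
        _ = 2 * (Real.sqrt (y-1))⁻¹ * (2 * Real.sqrt (y-1)) := by field_simp; ring
        _ ≤ 2 * (Real.sqrt (y-1))⁻¹ * Real.sqrt (y ^ 4 - 1) := by
            apply mul_le_mul_of_nonneg_left h1 (by positivity)
    have hnn : 0 ≤ y ^ 2 / Real.sqrt (y ^ 4 - 1) := by positivity
    rw [Real.norm_eq_abs, abs_le]
    constructor
    · have : (0:ℝ) ≤ 2 * (Real.sqrt (y - 1))⁻¹ := by positivity
      linarith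
    · linarith
  · apply Integrable.mono'
      ((integrableOn_Ioi_rpow_of_lt (a := -4) (by norm_num) (by norm_num : (0:ℝ) < 2)).const_mul 2)
      (g_meas.aestronglyMeasurable.restrict)
    rw [ae_restrict_iff' measurableSet_Ioi]
    filter_upwards with y hy
    have hy2 : (2:ℝ) < y := hy
    have hy0 : (0:ℝ) < y := by linarith
    have hs : 0 < Real.sqrt (y ^ 4 - 1) := lt_of_lt_of_le (by positivity) (sqrt_lb2 hy2.le)
    have h1 := sqrt_lb2 hy2.le
    have h16 := pow4_ge hy2.le
    have hsq : Real.sqrt (y ^ 4 - 1) ^ 2 = y ^ 4 - 1 := Real.sq_sqrt (by linarith)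
    have hub : Real.sqrt (y ^ 4 - 1) ≤ y ^ 2 := by
      rw [show y ^ 4 = (y ^ 2) ^ 2 by ring] at *
      calc Real.sqrt ((y^2)^2 - 1) ≤ Real.sqrt ((y^2)^2) := Real.sqrt_le_sqrt (by linarith)
        _ = y ^ 2 := Real.sqrt_sq (by positivity)
    have hg0 : 0 ≤ y ^ 2 / Real.sqrt (y ^ 4 - 1) - 1 := by
      rw [sub_nonneg, le_div_iff₀ hs]; linarith
    have hgid : y ^ 2 / Real.sqrt (y ^ 4 - 1) - 1
        = 1 / (Real.sqrt (y ^ 4 - 1) * (y ^ 2 + Real.sqrt (y ^ 4 - 1))) := by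
      rw [div_sub_one hs.ne', eq_div_iff (by positivity)]
      field_simp
      nlinarith [hsq]
    rw [Real.norm_eq_abs, abs_of_nonneg hg0, hgid]
    show _ ≤ 2 * y ^ (-4:ℝ)
    rw [rpow_neg4 hy0, div_le_iff₀ (by positivity)]
    have hd : y ^ 4 / 2 ≤ Real.sqrt (y ^ 4 - 1) * (y ^ 2 + Real.sqrt (y ^ 4 - 1)) := by
      nlinarith [h1, hs.le]
    calc (1:ℝ) = 2 * (y ^ 4)⁻¹ * (y ^ 4 / 2) := by field_simp
      _ ≤ _ := by
          apply mul_le_mul_of_nonneg_left hd (by positivity)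


noncomputable def Fad (y : ℝ) : ℝ := Real.sqrt (y ^ 4 - 1) / y - y

lemma Fad_deriv {y : ℝ} (hy : 1 < y) :
    HasDerivAt Fad ((y ^ 4 + 1) / (y ^ 2 * Real.sqrt (y ^ 4 - 1)) - 1) y := by
  have hy0 : (0:ℝ) < y := by linarith
  have h41 : (0:ℝ) < y ^ 4 - 1 := by
    have := one_lt_pow₀ hy (by norm_num : 4 ≠ 0); linarith
  have hs : 0 < Real.sqrt (y ^ 4 - 1) := Real.sqrt_pos.mpr h41
  have hsq : Real.sqrt (y ^ 4 - 1) ^ 2 = y ^ 4 - 1 := Real.sq_sqrt h41.le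
  have h1 : HasDerivAt (fun y : ℝ => y ^ 4 - 1) (4 * y ^ 3) y := by
    simpa using (hasDerivAt_pow 4 y).sub_const 1
  have h2 : HasDerivAt (fun y : ℝ => Real.sqrt (y ^ 4 - 1))
      (4 * y ^ 3 / (2 * Real.sqrt (y ^ 4 - 1))) y := h1.sqrt h41.ne'
  have h3 : HasDerivAt (fun y : ℝ => Real.sqrt (y ^ 4 - 1) / y)
      ((4 * y ^ 3 / (2 * Real.sqrt (y ^ 4 - 1)) * y - Real.sqrt (y ^ 4 - 1) * 1) / y ^ 2) y :=
    h2.div (hasDerivAt_id y) hy0.ne'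
  have h4 := h3.sub (hasDerivAt_id y)
  convert h4 using 1
  · rfl
  · rfl
  · rfl
  field_simp
  linear_combination 2 * hsq

lemma Fad_tendsto : Tendsto Fad atTop (nhds 0) := by
  have key : ∀ y : ℝ, 1 < y → Fad y = -(y * (Real.sqrt (y ^ 4 - 1) + y ^ 2))⁻¹ := by
    intro y hy
    have hy0 : (0:ℝ) < y := by linarith
    have h41 : (0:ℝ) < y ^ 4 - 1 := by
      have := one_lt_pow₀ hy (by norm_num : 4 ≠ 0); linarith
    have hs : 0 < Real.sqrt (y ^ 4 - 1) := Real.sqrt_pos.mpr h41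
    have hsq : Real.sqrt (y ^ 4 - 1) ^ 2 = y ^ 4 - 1 := Real.sq_sqrt h41.le
    rw [Fad]
    field_simp
    nlinarith [hsq]
  have hden : Tendsto (fun y : ℝ => y * (Real.sqrt (y ^ 4 - 1) + y ^ 2)) atTop atTop := by
    apply tendsto_atTop_mono' atTop ?_ tendsto_id
    filter_upwards [eventually_ge_atTop (1:ℝ)] with y hy
    have hs : 0 ≤ Real.sqrt (y ^ 4 - 1) := Real.sqrt_nonneg _
    show (y:ℝ) ≤ y * (Real.sqrt (y ^ 4 - 1) + y ^ 2)
    nlinarith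
  have := (hden.inv_tendsto_atTop).neg
  rw [neg_zero] at this
  apply this.congr'
  filter_upwards [eventually_gt_atTop (1:ℝ)] with y hy
  rw [key y hy]
  simp

lemma h_sum : ∀ y ∈ Ioi (1:ℝ),
    (y ^ 4 + 1) / (y ^ 2 * Real.sqrt (y ^ 4 - 1)) - 1
      = 1 / (y ^ 2 * Real.sqrt (y ^ 4 - 1)) + (y ^ 2 / Real.sqrt (y ^ 4 - 1) - 1) := by
  intro y hy
  have hy1 : (1:ℝ) < y := hy
  have hy0 : (0:ℝ) < y := by linarith
  have h41 : (0:ℝ) < y ^ 4 - 1 := by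
    have := one_lt_pow₀ hy1 (by norm_num : 4 ≠ 0); linarith
  have hs : 0 < Real.sqrt (y ^ 4 - 1) := Real.sqrt_pos.mpr h41
  field_simp
  ring

lemma h_int : IntegrableOn
    (fun y : ℝ => (y ^ 4 + 1) / (y ^ 2 * Real.sqrt (y ^ 4 - 1)) - 1) (Ioi 1) := by
  exact IntegrableOn.congr_fun (f_int.add g_int)
    (fun y hy => by simpa using (h_sum y hy).symm) measurableSet_Ioi

lemma key_sum : (∫ y in Ioi (1:ℝ), 1 / (y ^ 2 * Real.sqrt (y ^ 4 - 1)))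
    + (∫ y in Ioi (1:ℝ), (y ^ 2 / Real.sqrt (y ^ 4 - 1) - 1)) = 1 := by
  rw [← integral_add f_int g_int]
  have : ∫ y in Ioi (1:ℝ), (1 / (y ^ 2 * Real.sqrt (y ^ 4 - 1))
      + (y ^ 2 / Real.sqrt (y ^ 4 - 1) - 1))
      = ∫ y in Ioi (1:ℝ), ((y ^ 4 + 1) / (y ^ 2 * Real.sqrt (y ^ 4 - 1)) - 1) := by
    apply setIntegral_congr_fun measurableSet_Ioi
    intro y hy
    exact (h_sum y hy).symm
  rw [this]
  have hcont : ContinuousWithinAt Fad (Ici 1) 1 := by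
    apply ContinuousAt.continuousWithinAt
    apply ContinuousAt.sub ?_ continuousAt_id
    apply ContinuousAt.div ?_ continuousAt_id one_ne_zero
    exact (Real.continuous_sqrt.comp (by continuity)).continuousAt
  have := integral_Ioi_of_hasDerivAt_of_tendsto hcont
    (fun y hy => Fad_deriv hy) h_int Fad_tendsto
  rw [this, Fad]
  norm_num


lemma I1_val : ∫ y in Ioi (1:ℝ), 1 / (y ^ 2 * Real.sqrt (y ^ 4 - 1))
    = Real.sqrt π * Real.Gamma (3/4) / Real.Gamma (1/4) := by
  have h := I1_sub.trans realBeta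
  rw [Real.Gamma_one_half_eq, show (5/4:ℝ) = 1/4 + 1 by norm_num,
    Real.Gamma_add_one (by norm_num)] at h
  have hG : 0 < Real.Gamma (1/4) := Real.Gamma_pos_of_pos (by norm_num)
  field_simp at h ⊢
  linarith

lemma I1_pos : 0 < ∫ y in Ioi (1:ℝ), 1 / (y ^ 2 * Real.sqrt (y ^ 4 - 1)) := by
  rw [I1_val]
  have hG : 0 < Real.Gamma (1/4) := Real.Gamma_pos_of_pos (by norm_num)
  have hG3 : 0 < Real.Gamma (3/4) := Real.Gamma_pos_of_pos (by norm_num)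
  have : 0 < Real.sqrt π := Real.sqrt_pos.mpr Real.pi_pos
  positivity

lemma I1_sq : (∫ y in Ioi (1:ℝ), 1 / (y ^ 2 * Real.sqrt (y ^ 4 - 1))) ^ 2
    * Real.Gamma (1/4) ^ 4 = 2 * π ^ 3 := by
  rw [I1_val]
  have hrefl : Real.Gamma (1/4) * Real.Gamma (3/4) = π * Real.sqrt 2 := by
    have h := Real.Gamma_mul_Gamma_one_sub (1/4)
    rw [show (1:ℝ) - 1/4 = 3/4 by norm_num, show π * (1/4) = π/4 by ring,
      Real.sin_pi_div_four] at h
    have h2 : Real.sqrt 2 * Real.sqrt 2 = 2 := Real.mul_self_sqrt (by norm_num)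
    have h2pos : 0 < Real.sqrt 2 := Real.sqrt_pos.mpr (by norm_num)
    rw [h]
    rw [div_div_eq_mul_div, div_eq_iff (by positivity)]
    linear_combination (-π) * h2
  have hG : 0 < Real.Gamma (1/4) := Real.Gamma_pos_of_pos (by norm_num)
  have hpi : Real.sqrt π * Real.sqrt π = π := Real.mul_self_sqrt Real.pi_pos.le
  have h2 : Real.sqrt 2 * Real.sqrt 2 = 2 := Real.mul_self_sqrt (by norm_num)
  have e1 : (Real.sqrt π * Real.Gamma (3/4) / Real.Gamma (1/4)) ^ 2 * Real.Gamma (1/4) ^ 4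
      = Real.sqrt π ^ 2 * (Real.Gamma (1/4) * Real.Gamma (3/4)) ^ 2 := by
    field_simp
  rw [e1, hrefl]
  linear_combination (π^2 * Real.sqrt 2 * Real.sqrt 2) * hpi + π^3 * h2


/-- For the static Nambu–Goto string in `AdS₅×S⁵` with radius-squared parameter `R²`:
with `L(U₀) = (2R²/U₀)·∫_{1}^{∞} dy/(y²√(y⁴−1))` the separation and
`E(U₀) = (U₀/π)·( ∫_{1}^{∞} ( y²/√(y⁴−1) − 1 ) dy − 1 )` the renormalized energy, for every
`U₀ > 0` one has `E(U₀)·L(U₀) = −4π²R²/Γ(1/4)⁴`; in particular `E(U₀) < 0` and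
`E = −(4π²R²/Γ(1/4)⁴)·(1/L)`. -/
theorem adS5_conformal_coulomb_law (R : ℝ) (hR : 0 < R) (L E : ℝ → ℝ)
    (hL : ∀ U₀, L U₀ =
      (2 * R ^ 2 / U₀) * ∫ y in Ioi (1 : ℝ), 1 / (y ^ 2 * Real.sqrt (y ^ 4 - 1)))
    (hE : ∀ U₀, E U₀ =
      (U₀ / Real.pi) * ((∫ y in Ioi (1 : ℝ), (y ^ 2 / Real.sqrt (y ^ 4 - 1) - 1)) - 1)) :
    ∀ U₀ : ℝ, 0 < U₀ →
      E U₀ * L U₀ = -(4 * Real.pi ^ 2 * R ^ 2 / (Real.Gamma (1 / 4)) ^ 4) ∧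
      E U₀ < 0 ∧
      E U₀ = -(4 * Real.pi ^ 2 * R ^ 2 / (Real.Gamma (1 / 4)) ^ 4) * (1 / L U₀) := by
  intro U₀ hU₀
  set A := ∫ y in Ioi (1:ℝ), 1 / (y ^ 2 * Real.sqrt (y ^ 4 - 1)) with hA
  set B := ∫ y in Ioi (1:ℝ), (y ^ 2 / Real.sqrt (y ^ 4 - 1) - 1) with hB
  have hApos : 0 < A := I1_pos
  have hsum : A + B = 1 := key_sum
  have hG : 0 < Real.Gamma (1/4) := Real.Gamma_pos_of_pos (by norm_num)
  have hpi := Real.pi_pos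
  have hEeq : E U₀ = -(U₀ / π) * A := by
    rw [hE U₀, show B - 1 = -A by linarith]; ring
  have hLeq : L U₀ = (2 * R ^ 2 / U₀) * A := hL U₀
  have hLpos : 0 < L U₀ := by rw [hLeq]; positivity
  have hsq := I1_sq
  rw [← hA] at hsq
  have hmain : E U₀ * L U₀ = -(4 * π ^ 2 * R ^ 2 / Real.Gamma (1/4) ^ 4) := by
    rw [hEeq, hLeq]
    field_simp
    linear_combination (-2) * hsq
  refine ⟨hmain, ?_, ?_⟩
  · rw [hEeq]
    have : 0 < (U₀ / π) * A := by positivity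
    linarith
  · rw [eq_comm, mul_one_div, div_eq_iff hLpos.ne', hmain]
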